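/- Let v1 = (1, 0, 0), v2 = (0, 1, 0), v3 = (0, 0, 1), v4 = (1/√3, 1/√3, 1/√3) in ℝ^3. There is no unit vector ξ ∈ ℝ^3 such that ⟨ξ, vi⟩^2 = ⟨ξ, vj⟩^2 for all i, j ∈ {1, 2, 3, 4}. -/

import Mathlib

open scoped RealInnerProductSpace

/-- The four directions `v1 = e1`, `v2 = e2`, `v3 = e3`, `v4 = (1/√3)(1,1,1)` in `ℝ³`. -/
noncomputable def dirs3 : Fin 4 → EuclideanSpace ℝ (Fin 3) :=
  ![(WithLp.equiv 2 (Fin 3 → ℝ)).symm ![1, 0, 0],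
    (WithLp.equiv 2 (Fin 3 → ℝ)).symm ![0, 1, 0],
    (WithLp.equiv 2 (Fin 3 → ℝ)).symm ![0, 0, 1],
    (WithLp.equiv 2 (Fin 3 → ℝ)).symm
      ![1 / Real.sqrt 3, 1 / Real.sqrt 3, 1 / Real.sqrt 3]]

/-- In dimension `3`, there is no unit vector `ξ` with `⟨ξ, v_i⟩² = ⟨ξ, v_j⟩²`
for all pairs among `e1, e2, e3` and `(1/√3)(1,1,1)`. -/
theorem stmt6 :
    ¬ ∃ ξ : EuclideanSpace ℝ (Fin 3), ‖ξ‖ = 1 ∧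
        ∀ i j : Fin 4, ⟪ξ, dirs3 i⟫ ^ 2 = ⟪ξ, dirs3 j⟫ ^ 2 := by
  rintro ⟨ξ, hn, h⟩
  set a := ξ 0 with ha
  set b := ξ 1 with hb
  set c := ξ 2 with hc
  have hs3 : Real.sqrt 3 ^ 2 = 3 := Real.sq_sqrt (by norm_num)
  have hs3pos : (0:ℝ) < Real.sqrt 3 := Real.sqrt_pos.mpr (by norm_num)
  have hnorm : a ^ 2 + b ^ 2 + c ^ 2 = 1 := by
    have := hn
    rw [EuclideanSpace.norm_eq] at this
    have h2 : (∑ i : Fin 3, ξ i ^ 2) = 1 := by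
      have := congrArg (· ^ 2) this
      simpa [Real.sq_sqrt (Finset.sum_nonneg fun i _ => sq_nonneg (ξ i)), sq_abs] using this
    simpa [Fin.sum_univ_three, ← ha, ← hb, ← hc] using h2
  have hinner : ∀ i : Fin 4, ⟪ξ, dirs3 i⟫ = ∑ k : Fin 3, ξ k * dirs3 i k := by
    intro i
    simp [PiLp.inner_apply, RCLike.inner_apply, mul_comm]
  have h0 : ⟪ξ, dirs3 0⟫ = a := by rw [hinner]; simp [dirs3, Fin.sum_univ_three]; rfl
  have h1 : ⟪ξ, dirs3 1⟫ = b := by rw [hinner]; simp [dirs3, Fin.sum_univ_three]; rfl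
  have h2 : ⟪ξ, dirs3 2⟫ = c := by rw [hinner]; simp [dirs3, Fin.sum_univ_three]; rfl
  have h3 : ⟪ξ, dirs3 3⟫ = (a + b + c) / Real.sqrt 3 := by
    rw [hinner]; simp [dirs3, Fin.sum_univ_three]; field_simp; rfl
  have e01 : a ^ 2 = b ^ 2 := by have := h 0 1; rwa [h0, h1] at this
  have e02 : a ^ 2 = c ^ 2 := by have := h 0 2; rwa [h0, h2] at this
  have e03 : a ^ 2 = (a + b + c) ^ 2 / 3 := by
    have := h 0 3; rw [h0, h3, div_pow, hs3] at this; exact this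
  have ha2 : a ^ 2 = 1 / 3 := by nlinarith
  have hsum : (a + b + c) ^ 2 = 1 := by rw [e03] at ha2; linarith
  have hb' : b = a ∨ b = -a := sq_eq_sq_iff_eq_or_eq_neg.mp e01.symm
  have hc' : c = a ∨ c = -a := sq_eq_sq_iff_eq_or_eq_neg.mp e02.symm
  rcases hb' with hb' | hb' <;> rcases hc' with hc' | hc' <;> rw [hb', hc'] at hsum <;>
    nlinarith [sq_nonneg a]
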